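/- Let ξ ∈ ℝ² with |ξ|²/4 ≤ |ξ₁| < |ξ|²/2 (the region D₃), λ± = (-|ξ|² ± √(|ξ|⁴ - 4ξ₁²))/2. Then λ₊ = -2ξ₁²/(|ξ|² + √(|ξ|⁴ - 4ξ₁²)) ∈ (-|ξ|²/2, -|ξ|²/16], λ₋ ∈ (-|ξ|², -|ξ|²/2), and e^{λ₊t} - e^{λ₋t} ≤ e^{λ₊t}(λ₊ - λ₋)t for all t ≥ 0. -/
import Mathlib


/-- On `D₃` (`|ξ|²/4 ≤ |ξ₁| < |ξ|²/2`), with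
`λ± = (-|ξ|² ± √(|ξ|⁴-4ξ₁²))/2`:
`λ₊ = -2ξ₁²/(|ξ|² + √(|ξ|⁴-4ξ₁²)) ∈ (-|ξ|²/2, -|ξ|²/16]`,
`λ₋ ∈ (-|ξ|², -|ξ|²/2)`, and `e^{λ₊t} - e^{λ₋t} ≤ e^{λ₊t}(λ₊-λ₋)t` for all `t ≥ 0`. -/
theorem stmt5 (ξ₁ ξ₂ : ℝ) (hne : (ξ₁, ξ₂) ≠ (0, 0))
    (h1 : (ξ₁ ^ 2 + ξ₂ ^ 2) / 4 ≤ |ξ₁|) (h2 : |ξ₁| < (ξ₁ ^ 2 + ξ₂ ^ 2) / 2) :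
    let s : ℝ := ξ₁ ^ 2 + ξ₂ ^ 2
    let lamp : ℝ := (-s + Real.sqrt (s ^ 2 - 4 * ξ₁ ^ 2)) / 2
    let lamm : ℝ := (-s - Real.sqrt (s ^ 2 - 4 * ξ₁ ^ 2)) / 2
    lamp = -(2 * ξ₁ ^ 2) / (s + Real.sqrt (s ^ 2 - 4 * ξ₁ ^ 2)) ∧
    lamp ∈ Set.Ioc (-(s / 2)) (-(s / 16)) ∧
    lamm ∈ Set.Ioo (-s) (-(s / 2)) ∧
    ∀ t : ℝ, 0 ≤ t →
      Real.exp (lamp * t) - Real.exp (lamm * t)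
        ≤ Real.exp (lamp * t) * (lamp - lamm) * t := by
  intro s lamp lamm
  have hs : 0 < s := by
    have := h1.trans_lt h2
    simp only [s]; linarith
  have habs : |ξ₁| ^ 2 = ξ₁ ^ 2 := sq_abs ξ₁
  have hseq : s = ξ₁ ^ 2 + ξ₂ ^ 2 := rfl
  have hd : 0 < s ^ 2 - 4 * ξ₁ ^ 2 := by nlinarith [abs_nonneg ξ₁]
  set r := Real.sqrt (s ^ 2 - 4 * ξ₁ ^ 2) with hrdef
  have hr : 0 < r := Real.sqrt_pos.mpr hd
  have hrsq : r ^ 2 = s ^ 2 - 4 * ξ₁ ^ 2 := Real.sq_sqrt hd.le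
  have hrs : r < s := by nlinarith
  have hx1 : s ^ 2 / 16 ≤ ξ₁ ^ 2 := by nlinarith [abs_nonneg ξ₁]
  refine ⟨?_, ⟨?_, ?_⟩, ⟨?_, ?_⟩, ?_⟩
  · show (-s + r) / 2 = -(2 * ξ₁ ^ 2) / (s + r)
    rw [div_eq_div_iff (by norm_num) (by linarith)]
    nlinarith
  · show -(s / 2) < (-s + r) / 2
    linarith
  · show (-s + r) / 2 ≤ -(s / 16)
    nlinarith [sq_nonneg (8 * r - 7 * s), mul_pos hr hs]
  · show -s < (-s - r) / 2
    nlinarith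
  · show (-s - r) / 2 < -(s / 2)
    linarith
  · intro t ht
    have h := Real.add_one_le_exp (lamm * t - lamp * t)
    have hpos := Real.exp_pos (lamp * t)
    have hsplit : Real.exp (lamm * t) =
        Real.exp (lamp * t) * Real.exp (lamm * t - lamp * t) := by
      rw [← Real.exp_add]; ring_nf
    nlinarith [mul_le_mul_of_nonneg_left h hpos.le]
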